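/- Let (X,r,μ) be an ultra-metric measure space and let h > 0. Then (μ ⊗ μ)({(x,y) ∈ X × X : r(x,y) = h}) = 0 if and only if μ(B̄(x,h)) = μ(B(x,h)) for every x ∈ supp(μ), i.e. if and only if every closed ball of radius h centered in the support has the same μ-measure as the corresponding open ball. -/

import Mathlib

open MeasureTheory Metric

/-- The support of a Borel measure on a metric space: the set of points all of whose
open neighborhoods have positive measure. -/
def msupp {X : Type*} [MetricSpace X] [MeasurableSpace X] (μ : Measure X) : Set X :=
  {x | ∀ ε : ℝ, 0 < ε → 0 < μ (ball x ε)}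

lemma msupp_compl_null {X : Type*} [MetricSpace X] [TopologicalSpace.SeparableSpace X]
    [MeasurableSpace X] [BorelSpace X] (μ : Measure X) : μ (msupp μ)ᶜ = 0 := by
  haveI : SecondCountableTopology X := UniformSpace.secondCountable_of_separable X
  obtain ⟨T, hTc, hTsub, hTeq⟩ := TopologicalSpace.isOpen_sUnion_countable
    {u : Set X | (∃ x ε, 0 < ε ∧ u = ball x ε) ∧ μ u = 0}
    (fun u hu => by obtain ⟨⟨x, ε, _, rfl⟩, _⟩ := hu; exact isOpen_ball)
  have hT0 : μ (⋃₀ T) = 0 := (measure_sUnion_null_iff hTc).2 fun s hs => (hTsub hs).2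
  refine measure_mono_null ?_ (hTeq ▸ hT0)
  intro x hx
  simp only [msupp, Set.mem_compl_iff, Set.mem_setOf_eq] at hx
  push_neg at hx
  obtain ⟨ε, hε, h0⟩ := hx
  exact ⟨ball x ε, ⟨⟨x, ε, hε, rfl⟩, le_antisymm h0 zero_le⟩, mem_ball_self hε⟩

/-- In an ultra-metric measure space, `μ ⊗ μ` puts no mass on pairs at distance exactly `h`
if and only if every closed `h`-ball centered in the support has the same measure as the
corresponding open `h`-ball. -/
theorem stmt8 {X : Type*} [MetricSpace X] [CompleteSpace X]
    [TopologicalSpace.SeparableSpace X] [MeasurableSpace X] [BorelSpace X]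
    (hultra : ∀ x y z : X, dist x y ≤ max (dist x z) (dist z y))
    (μ : Measure X) [IsFiniteMeasure μ] (h : ℝ) (hh : 0 < h) :
    (μ.prod μ) {p : X × X | dist p.1 p.2 = h} = 0 ↔
      ∀ x ∈ msupp μ, μ (closedBall x h) = μ (ball x h) := by
  haveI : IsUltrametricDist X := ⟨fun x y z => hultra x z y⟩
  set S : Set (X × X) := {p : X × X | dist p.1 p.2 = h} with hSdef
  have hS : MeasurableSet S :=
    (isClosed_eq (continuous_fst.dist continuous_snd) continuous_const).measurableSet
  have key : ∀ x : X, Prod.mk x ⁻¹' S = closedBall x h \ ball x h := by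
    intro x
    ext y
    simp only [Set.mem_preimage, hSdef, Set.mem_setOf_eq, Set.mem_diff, mem_closedBall,
      mem_ball, dist_comm y x, not_lt]
    exact ⟨fun e => ⟨e.le, e.ge⟩, fun ⟨a, b⟩ => le_antisymm a b⟩
  have hdiff : ∀ x : X, μ (closedBall x h \ ball x h) = 0 ↔
      μ (closedBall x h) = μ (ball x h) := by
    intro x
    rw [measure_diff ball_subset_closedBall measurableSet_ball.nullMeasurableSet
      (measure_ne_top μ _)]
    constructor
    · intro h0
      exact le_antisymm (tsub_eq_zero_iff_le.mp h0) (measure_mono ball_subset_closedBall)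
    · intro e; rw [e, tsub_self]
  have hprod : μ.prod μ S = ∫⁻ x, μ (closedBall x h \ ball x h) ∂μ := by
    rw [Measure.prod_apply hS]
    simp_rw [key]
  have hmeas : Measurable fun x => μ (closedBall x h \ ball x h) := by
    have := measurable_measure_prodMk_left (ν := μ) hS
    simpa [key] using this
  have hiff : μ.prod μ S = 0 ↔ ∀ᵐ x ∂μ, μ (closedBall x h \ ball x h) = 0 := by
    rw [hprod, lintegral_eq_zero_iff hmeas]
    exact ⟨fun H => H, fun H => H⟩
  constructor
  · intro hzero x hx
    have hae := hiff.mp hzero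
    have hball : 0 < μ (ball x h) := hx h hh
    -- find y in ball x h with μ (closedBall y h \ ball y h) = 0
    have hnull : μ {y | ¬ μ (closedBall y h \ ball y h) = 0} = 0 := hae
    have : ∃ y ∈ ball x h, μ (closedBall y h \ ball y h) = 0 := by
      by_contra hc
      push_neg at hc
      have hsub : ball x h ⊆ {y | ¬ μ (closedBall y h \ ball y h) = 0} := fun y hy => hc y hy
      exact absurd (measure_mono_null hsub hnull) hball.ne'
    obtain ⟨y, hy, hy0⟩ := this
    have e1 : closedBall x h = closedBall y h :=
      IsUltrametricDist.closedBall_eq_of_mem (ball_subset_closedBall hy)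
    have e2 : ball x h = ball y h := IsUltrametricDist.ball_eq_of_mem hy
    rw [e1, e2]
    exact (hdiff y).mp hy0
  · intro heq
    refine hiff.mpr ?_
    rw [ae_iff]
    refine measure_mono_null ?_ (msupp_compl_null μ)
    intro x hx
    simp only [Set.mem_setOf_eq] at hx
    intro hxs
    exact hx ((hdiff x).mpr (heq x hxs))
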